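/- Let ρ(x) = Π_{j: c_j ≤ a} (x−c_j)^{d_j+1} · Π_{j: c_j ≥ b} (c_j−x)^{d_j+1} and d = Σ_{j=1}^N (d_j+1). If n > d, then ∫ S_n(x) f(x) ρ(x) dμ(x) = 0 for every real polynomial f with deg f ≤ n−d−1 (i.e., S_n is quasi-orthogonal of order d with respect to ρ dμ), and consequently S_n has at least n−d sign changes in (a,b). -/

import Mathlib

open MeasureTheory Polynomial

/-- The support of a Borel measure on `ℝ`. -/
def mSupport (μ : Measure ℝ) : Set ℝ := {x | ∀ U ∈ nhds x, 0 < μ U}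

/-- The discrete Sobolev-type inner product. -/
noncomputable def sobolevIP (μ : Measure ℝ) {N : ℕ} (c : Fin N → ℝ) (d : Fin N → ℕ)
    (lam : Fin N → ℕ → ℝ) (f g : Polynomial ℝ) : ℝ :=
  (∫ x, f.eval x * g.eval x ∂μ) +
    ∑ j : Fin N, ∑ k ∈ Finset.range (d j + 1),
      lam j k * ((derivative^[k] f).eval (c j)) * ((derivative^[k] g).eval (c j))

-- The polynomial `ρ(x) = Π_{j : c_j ≤ a} (x - c_j)^{d_j+1} · Π_{j : c_j ≥ b} (c_j - x)^{d_j+1}`,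
-- where `E = (a,b)` is the interior of the convex hull of the support of the measure.
open Classical in
noncomputable def rhoPoly (E : Set ℝ) {N : ℕ} (c : Fin N → ℝ) (d : Fin N → ℕ) : Polynomial ℝ :=
  ∏ j : Fin N,
    if ∀ x ∈ E, c j ≤ x then (X - C (c j)) ^ (d j + 1) else (C (c j) - X) ^ (d j + 1)

lemma integrable_eval (μ : Measure ℝ) (hmom : ∀ k : ℕ, Integrable (fun x => x ^ k) μ)
    (p : Polynomial ℝ) : Integrable (fun x => p.eval x) μ := by
  have h : (fun x : ℝ => p.eval x)
      = fun x => ∑ k ∈ Finset.range (p.natDegree + 1), p.coeff k * x ^ k := by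
    funext x; rw [Polynomial.eval_eq_sum_range]
  rw [h]
  exact integrable_finset_sum _ (fun k _ => (hmom k).const_mul _)

lemma sobolevIP_expand (μ : Measure ℝ) (hmom : ∀ k : ℕ, Integrable (fun x => x ^ k) μ)
    {N : ℕ} (c : Fin N → ℝ) (d : Fin N → ℕ) (lam : Fin N → ℕ → ℝ) (g S : Polynomial ℝ) :
    sobolevIP μ c d lam g S
      = ∑ m ∈ Finset.range (g.natDegree + 1), g.coeff m * sobolevIP μ c d lam (X ^ m) S := by
  unfold sobolevIP
  simp only [mul_add]
  rw [Finset.sum_add_distrib]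
  congr 1
  · have h1 : (fun x : ℝ => g.eval x * S.eval x)
        = fun x => ∑ m ∈ Finset.range (g.natDegree + 1), g.coeff m * ((X ^ m * S).eval x) := by
      funext x
      rw [Polynomial.eval_eq_sum_range]
      rw [Finset.sum_mul]
      congr 1; funext m
      simp [mul_assoc]
    rw [h1, integral_finset_sum]
    · congr 1; funext m
      rw [← integral_const_mul]
      congr 1; funext x
      simp
    · intro m _
      have := (integrable_eval μ hmom (X ^ m * S)).const_mul (g.coeff m)
      simpa using this
  · have key : ∀ (j : Fin N) (k : ℕ),
        lam j k * (derivative^[k] g).eval (c j) * (derivative^[k] S).eval (c j)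
        = ∑ m ∈ Finset.range (g.natDegree + 1),
            g.coeff m * (lam j k * (derivative^[k] (X ^ m : Polynomial ℝ)).eval (c j)
              * (derivative^[k] S).eval (c j)) := by
      intro j k
      have hg : derivative^[k] g
          = ∑ i ∈ Finset.range (g.natDegree + 1), C (g.coeff i) * derivative^[k] (X ^ i) := by
        conv_lhs => rw [g.as_sum_range' (g.natDegree + 1) (Nat.lt_succ_self _)]
        rw [Polynomial.iterate_derivative_sum]
        congr 1; funext i
        rw [← Polynomial.C_mul_X_pow_eq_monomial, Polynomial.iterate_derivative_C_mul]
      rw [hg]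
      simp only [Polynomial.eval_finset_sum, Polynomial.eval_mul, Polynomial.eval_C]
      rw [Finset.mul_sum, Finset.sum_mul]
      congr 1; funext i
      ring
    simp only [key, Finset.mul_sum]
    rw [Finset.sum_comm]
    congr 1; funext j
    rw [Finset.sum_comm]

lemma sobolevIP_vanish (μ : Measure ℝ) (hmom : ∀ k : ℕ, Integrable (fun x => x ^ k) μ)
    {N : ℕ} (c : Fin N → ℝ) (d : Fin N → ℕ) (lam : Fin N → ℕ → ℝ) (n : ℕ) (g S : Polynomial ℝ)
    (hdeg : g.natDegree < n) (h0 : ∀ k < n, sobolevIP μ c d lam (X ^ k) S = 0) :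
    sobolevIP μ c d lam g S = 0 := by
  rw [sobolevIP_expand μ hmom]
  apply Finset.sum_eq_zero
  intro m hm
  rw [h0 m (lt_of_lt_of_le (Finset.mem_range.mp hm) hdeg), mul_zero]

section rho

open Classical

variable {N : ℕ} (E : Set ℝ) (c : Fin N → ℝ) (d : Fin N → ℕ)

lemma rho_factor_ne (j : Fin N) :
    (if ∀ x ∈ E, c j ≤ x then ((X : Polynomial ℝ) - C (c j)) ^ (d j + 1)
      else (C (c j) - X) ^ (d j + 1)) ≠ 0 := by
  split
  · exact pow_ne_zero _ (Polynomial.X_sub_C_ne_zero _)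
  · have : (C (c j) - X : Polynomial ℝ) = -(X - C (c j)) := by ring
    rw [this]
    exact pow_ne_zero _ (neg_ne_zero.mpr (Polynomial.X_sub_C_ne_zero _))

lemma rhoPoly_ne_zero : rhoPoly E c d ≠ 0 := by
  unfold rhoPoly
  rw [Finset.prod_ne_zero_iff]
  intro j _
  exact rho_factor_ne E c d j

lemma rhoPoly_natDegree : (rhoPoly E c d).natDegree = ∑ j : Fin N, (d j + 1) := by
  unfold rhoPoly
  rw [Polynomial.natDegree_prod _ _ (fun j _ => rho_factor_ne E c d j)]
  congr 1; funext j
  split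
  · rw [Polynomial.natDegree_pow, Polynomial.natDegree_X_sub_C, mul_one]
  · have : (C (c j) - X : Polynomial ℝ) = -(X - C (c j)) := by ring
    rw [this, Polynomial.natDegree_pow, Polynomial.natDegree_neg,
      Polynomial.natDegree_X_sub_C, mul_one]

lemma rhoPoly_dvd (j : Fin N) : ((X : Polynomial ℝ) - C (c j)) ^ (d j + 1) ∣ rhoPoly E c d := by
  have h1 : ((X : Polynomial ℝ) - C (c j)) ^ (d j + 1)
      ∣ (if ∀ x ∈ E, c j ≤ x then ((X : Polynomial ℝ) - C (c j)) ^ (d j + 1)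
          else (C (c j) - X) ^ (d j + 1)) := by
    split
    · exact dvd_rfl
    · have h2 : (C (c j) - X : Polynomial ℝ) = -(X - C (c j)) := by ring
      rw [h2, neg_pow]
      exact Dvd.intro_left _ rfl
  exact h1.trans (Finset.dvd_prod_of_mem _ (Finset.mem_univ j))

lemma rhoPoly_eval_ne (ξ : ℝ) (hξ : ∀ j, c j ≠ ξ) : (rhoPoly E c d).eval ξ ≠ 0 := by
  unfold rhoPoly
  rw [Polynomial.eval_prod]
  apply Finset.prod_ne_zero_iff.mpr
  intro j _
  split
  · simp only [Polynomial.eval_pow, Polynomial.eval_sub, Polynomial.eval_X, Polynomial.eval_C]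
    exact pow_ne_zero _ (sub_ne_zero.mpr (fun h => hξ j h.symm))
  · simp only [Polynomial.eval_pow, Polynomial.eval_sub, Polynomial.eval_X, Polynomial.eval_C]
    exact pow_ne_zero _ (sub_ne_zero.mpr (hξ j))

end rho

lemma part1 (μ : Measure ℝ) (hmom : ∀ k : ℕ, Integrable (fun x => x ^ k) μ)
    (E : Set ℝ) {N : ℕ} (c : Fin N → ℝ) (d : Fin N → ℕ) (lam : Fin N → ℕ → ℝ)
    (n : ℕ) (S : Polynomial ℝ)
    (h0 : ∀ k < n, sobolevIP μ c d lam (X ^ k) S = 0)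
    (hn : (∑ j : Fin N, (d j + 1)) < n)
    (f : Polynomial ℝ) (hf : f.natDegree ≤ n - (∑ j : Fin N, (d j + 1)) - 1) :
    ∫ x, S.eval x * f.eval x * (rhoPoly E c d).eval x ∂μ = 0 := by
  by_cases hf0 : f = 0
  · simp [hf0]
  set D := ∑ j : Fin N, (d j + 1) with hD
  set ρ := rhoPoly E c d with hρ
  have hρ0 : ρ ≠ 0 := rhoPoly_ne_zero E c d
  set g := f * ρ with hg
  have hg0 : g ≠ 0 := mul_ne_zero hf0 hρ0
  have hgdeg : g.natDegree < n := by
    rw [hg, Polynomial.natDegree_mul hf0 hρ0, rhoPoly_natDegree, ← hD]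
    omega
  have hvan := sobolevIP_vanish μ hmom c d lam n g S hgdeg h0
  have hder : ∀ (j : Fin N) (k : ℕ), k < d j + 1 → (derivative^[k] g).eval (c j) = 0 := by
    intro j k hk
    have hdvd : ((X : Polynomial ℝ) - C (c j)) ^ (d j + 1) ∣ g :=
      (rhoPoly_dvd E c d j).trans (Dvd.intro_left f rfl)
    have hmult : d j + 1 ≤ Polynomial.rootMultiplicity (c j) g :=
      (Polynomial.le_rootMultiplicity_iff hg0).mpr hdvd
    exact Polynomial.isRoot_iterate_derivative_of_lt_rootMultiplicity (lt_of_lt_of_le hk hmult)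
  unfold sobolevIP at hvan
  have hzero : ∑ j : Fin N, ∑ k ∈ Finset.range (d j + 1),
      lam j k * ((derivative^[k] g).eval (c j)) * ((derivative^[k] S).eval (c j)) = 0 := by
    apply Finset.sum_eq_zero; intro j _
    apply Finset.sum_eq_zero; intro k hk
    rw [hder j k (Finset.mem_range.mp hk), mul_zero, zero_mul]
  rw [hzero, add_zero] at hvan
  rw [← hvan]
  congr 1; funext x
  rw [hg]
  simp only [Polynomial.eval_mul]
  ring

lemma exists_odd_root : ∀ (m : ℕ) (p : Polynomial ℝ), p.natDegree ≤ m → ∀ x y : ℝ,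
    p.eval x < 0 → 0 < p.eval y →
    ∃ z ∈ Set.Ioo (min x y) (max x y), Odd (Polynomial.rootMultiplicity z p) := by
  intro m
  induction m with
  | zero =>
    intro p hp x y hx hy
    obtain ⟨a, rfl⟩ := Polynomial.natDegree_eq_zero.mp (Nat.le_zero.mp hp)
    simp only [Polynomial.eval_C] at hx hy
    linarith
  | succ m ih =>
    intro p hp x y hx hy
    have hp0 : p ≠ 0 := fun h => by simp [h] at hx
    have hcont : ∀ a b : ℝ, ContinuousOn (fun t => p.eval t) (Set.Icc a b) :=
      fun a b => (Polynomial.continuous p).continuousOn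
    have hz : ∃ z ∈ Set.Ioo (min x y) (max x y), p.eval z = 0 := by
      rcases lt_trichotomy x y with h | h | h
      · have := intermediate_value_Ioo h.le (hcont x y)
        have h0 : (0 : ℝ) ∈ Set.Ioo (p.eval x) (p.eval y) := ⟨hx, hy⟩
        obtain ⟨z, hz1, hz2⟩ := this h0
        exact ⟨z, by rwa [min_eq_left h.le, max_eq_right h.le], hz2⟩
      · subst h; linarith
      · have := intermediate_value_Ioo' h.le (hcont y x)
        have h0 : (0 : ℝ) ∈ Set.Ioo (p.eval x) (p.eval y) := ⟨hx, hy⟩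
        obtain ⟨z, hz1, hz2⟩ := this h0
        exact ⟨z, by rwa [min_eq_right h.le, max_eq_left h.le], hz2⟩
    obtain ⟨z, hzmem, hzroot⟩ := hz
    set k := Polynomial.rootMultiplicity z p with hk
    have hkpos : 0 < k := (Polynomial.rootMultiplicity_pos hp0).mpr hzroot
    rcases Nat.even_or_odd k with hke | hko
    swap
    · exact ⟨z, hzmem, hko⟩
    set q := p /ₘ (X - C z) ^ k with hq
    have hfac : (X - C z) ^ k * q = p := Polynomial.pow_mul_divByMonic_rootMultiplicity_eq p z
    have hqz : q.eval z ≠ 0 := Polynomial.eval_divByMonic_pow_rootMultiplicity_ne_zero z hp0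
    have hq0 : q ≠ 0 := fun h => hqz (by simp [h])
    have hqdeg : q.natDegree ≤ m := by
      have := Polynomial.natDegree_mul (pow_ne_zero k (Polynomial.X_sub_C_ne_zero z)) hq0
      rw [hfac] at this
      rw [Polynomial.natDegree_pow, Polynomial.natDegree_X_sub_C, mul_one] at this
      omega
    have heval : ∀ t : ℝ, p.eval t = (t - z) ^ k * q.eval t := by
      intro t
      conv_lhs => rw [← hfac]
      simp
    have hsign : ∀ t : ℝ, p.eval t ≠ 0 → 0 < (t - z) ^ k := by
      intro t ht
      refine hke.pow_pos (sub_ne_zero.mpr ?_)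
      intro h; subst h; exact ht hzroot
    have hqx : q.eval x < 0 := by
      have h1 := hsign x (ne_of_lt hx)
      nlinarith [heval x]
    have hqy : 0 < q.eval y := by
      have h1 := hsign y (ne_of_gt hy)
      nlinarith [heval y]
    obtain ⟨z', hz'mem, hz'odd⟩ := ih q hqdeg x y hqx hqy
    refine ⟨z', hz'mem, ?_⟩
    have hmul : Polynomial.rootMultiplicity z' p
        = Polynomial.rootMultiplicity z' ((X - C z) ^ k)
          + Polynomial.rootMultiplicity z' q := by
      rw [← hfac] at hp0 ⊢
      exact Polynomial.rootMultiplicity_mul hp0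
    rw [hmul]
    by_cases hzz : z' = z
    · subst hzz
      rw [Polynomial.rootMultiplicity_X_sub_C_pow]
      exact hke.add_odd hz'odd
    · rw [Polynomial.rootMultiplicity_eq_zero (by
        simp only [Polynomial.IsRoot, Polynomial.eval_pow, Polynomial.eval_sub,
          Polynomial.eval_X, Polynomial.eval_C]
        exact pow_ne_zero _ (sub_ne_zero.mpr hzz))]
      rw [zero_add]
      exact hz'odd

lemma mSupport_compl_null (μ : Measure ℝ) : μ (mSupport μ)ᶜ = 0 := by
  classical
  set U : ℚ × ℚ → Set ℝ := fun pq =>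
    if μ (Set.Ioo (pq.1 : ℝ) pq.2) = 0 then Set.Ioo (pq.1 : ℝ) pq.2 else ∅ with hU
  have hnull : μ (⋃ pq, U pq) = 0 := by
    apply measure_iUnion_null
    intro pq
    by_cases h : μ (Set.Ioo (pq.1 : ℝ) pq.2) = 0
    · simpa only [hU, h, if_true] using h
    · simp only [hU, h, if_false]; simp
  refine measure_mono_null ?_ hnull
  intro x hx
  simp only [Set.mem_compl_iff, mSupport, Set.mem_setOf_eq, not_forall] at hx
  obtain ⟨V, hV, hVm⟩ := hx
  have hV0 : μ V = 0 := by
    by_contra h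
    exact hVm (pos_iff_ne_zero.mpr h)
  obtain ⟨l, u, hlu, hsub⟩ := mem_nhds_iff_exists_Ioo_subset.mp hV
  obtain ⟨p, hp1, hp2⟩ := exists_rat_btwn hlu.1
  obtain ⟨q, hq1, hq2⟩ := exists_rat_btwn hlu.2
  have hmem : x ∈ Set.Ioo (p : ℝ) q := ⟨hp2, hq1⟩
  have hIoo : μ (Set.Ioo (p : ℝ) q) = 0 := by
    refine measure_mono_null (fun t ht => hsub ⟨?_, ?_⟩) hV0
    · exact lt_trans hp1 ht.1
    · exact lt_trans ht.2 hq2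
  refine Set.mem_iUnion.mpr ⟨(p, q), ?_⟩
  rw [hU]
  simp only [hIoo, if_true]
  exact hmem

lemma integral_ne_zero_of_nonneg (μ : Measure ℝ) [IsFiniteMeasure μ]
    (hmom : ∀ k : ℕ, Integrable (fun x => x ^ k) μ)
    (hsupp : (mSupport μ).Infinite) (p : Polynomial ℝ) (hp : p ≠ 0)
    (hpos : ∀ x ∈ mSupport μ, 0 ≤ p.eval x) :
    ∫ x, p.eval x ∂μ ≠ 0 := by
  intro h0
  have hae : 0 ≤ᵐ[μ] fun x => p.eval x := by
    rw [Filter.EventuallyLE, Filter.eventually_iff, mem_ae_iff]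
    refine measure_mono_null (fun x hx => ?_) (mSupport_compl_null μ)
    simp only [Set.mem_compl_iff, Set.mem_setOf_eq, Pi.zero_apply, not_le] at hx ⊢
    intro hmem
    exact absurd (hpos x hmem) (not_le.mpr hx)
  have hzero := (integral_eq_zero_iff_of_nonneg_ae hae (integrable_eval μ hmom p)).mp h0
  have hnullne : μ {x | p.eval x ≠ 0} = 0 := by
    have h1 := ae_iff.mp hzero
    simpa using h1
  obtain ⟨x0, hx0s, hx0r⟩ := (hsupp.diff (Polynomial.finite_setOf_isRoot hp)).nonempty
  have hopen : IsOpen {x : ℝ | p.eval x ≠ 0} :=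
    isOpen_ne.preimage (Polynomial.continuous p)
  have hx0mem : x0 ∈ {x : ℝ | p.eval x ≠ 0} := hx0r
  have := hx0s _ (hopen.mem_nhds hx0mem)
  rw [hnullne] at this
  exact lt_irrefl 0 this

lemma interior_hull_nonempty {s : Set ℝ} (hs : s.Infinite) :
    (interior (convexHull ℝ s)).Nonempty := by
  obtain ⟨x, hx, y, hy, hxy⟩ := hs.nontrivial
  set u := min x y
  set v := max x y
  have huv : u < v := min_lt_max.mpr hxy
  have hK : Convex ℝ (convexHull ℝ s) := convex_convexHull ℝ s
  have hIcc : Set.Icc u v ⊆ convexHull ℝ s := by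
    have hus : u ∈ s := by
      rcases le_total x y with h | h
      · simpa [u, min_eq_left h] using hx
      · simpa [u, min_eq_right h] using hy
    have hvs : v ∈ s := by
      rcases le_total x y with h | h
      · simpa [v, max_eq_right h] using hy
      · simpa [v, max_eq_left h] using hx
    have hu : u ∈ convexHull ℝ s := subset_convexHull ℝ s hus
    have hv : v ∈ convexHull ℝ s := subset_convexHull ℝ s hvs
    exact hK.ordConnected.out hu hv
  have hIoo : Set.Ioo u v ⊆ interior (convexHull ℝ s) :=
    interior_maximal ((Set.Ioo_subset_Icc_self).trans hIcc) isOpen_Ioo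
  exact ⟨(u + v) / 2, hIoo ⟨by linarith, by linarith⟩⟩

lemma subset_closure_interior_hull {s : Set ℝ} (hs : s.Infinite) :
    s ⊆ closure (interior (convexHull ℝ s)) := by
  obtain ⟨y0, hy0⟩ := interior_hull_nonempty hs
  intro x hx
  have hK : Convex ℝ (convexHull ℝ s) := convex_convexHull ℝ s
  have hxK : x ∈ closure (convexHull ℝ s) :=
    subset_closure (subset_convexHull ℝ s hx)
  have hmem : ∀ t : ℝ, 0 < t → t ≤ 1 → (1 - t) * x + t * y0 ∈ interior (convexHull ℝ s) := by
    intro t ht0 ht1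
    have := hK.combo_closure_interior_mem_interior (a := 1 - t) (b := t) hxK hy0
      (by linarith) ht0 (by ring)
    simpa [smul_eq_mul] using this
  have htend : Filter.Tendsto (fun n : ℕ => (1 - ((n:ℝ) + 2)⁻¹) * x + (((n:ℝ) + 2)⁻¹) * y0)
      Filter.atTop (nhds x) := by
    have h2 : Filter.Tendsto (fun n : ℕ => ((n:ℝ) + 2)⁻¹) Filter.atTop (nhds 0) :=
      tendsto_inv_atTop_zero.comp
        (Filter.tendsto_atTop_add_const_right _ 2 tendsto_natCast_atTop_atTop)
    have : Filter.Tendsto (fun n : ℕ => (1 - ((n:ℝ) + 2)⁻¹) * x + (((n:ℝ) + 2)⁻¹) * y0)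
        Filter.atTop (nhds ((1 - 0) * x + 0 * y0)) := by
      apply Filter.Tendsto.add
      · exact (Filter.Tendsto.const_sub _ h2).mul_const x
      · exact h2.mul_const y0
    simpa using this
  refine mem_closure_of_tendsto htend (Filter.Eventually.of_forall fun n => ?_)
  refine hmem _ ?_ ?_
  · positivity
  · rw [inv_le_one_iff₀]
    right
    have : (0:ℝ) ≤ (n : ℝ) := Nat.cast_nonneg n
    linarith

theorem stmt1 (μ : Measure ℝ) [IsFiniteMeasure μ]
    (hmom : ∀ k : ℕ, Integrable (fun x => x ^ k) μ)
    (hsupp : (mSupport μ).Infinite)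
    {N : ℕ} (c : Fin N → ℝ) (d : Fin N → ℕ) (lam : Fin N → ℕ → ℝ)
    (hdmono : Monotone d)
    (hcdist : Function.Injective c)
    (hcout : ∀ j, c j ∉ interior (convexHull ℝ (mSupport μ)))
    (hlam : ∀ j k, k ≤ d j → 0 ≤ lam j k)
    (hlamd : ∀ j, 0 < lam j (d j))
    (n : ℕ) (S : Polynomial ℝ)
    (hS : S.Monic ∧ S.natDegree = n ∧ ∀ k < n, sobolevIP μ c d lam (X ^ k) S = 0)
    (hn : (∑ j : Fin N, (d j + 1)) < n) :
    (∀ f : Polynomial ℝ, f.natDegree ≤ n - (∑ j : Fin N, (d j + 1)) - 1 →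
      ∫ x, S.eval x * f.eval x *
        (rhoPoly (interior (convexHull ℝ (mSupport μ))) c d).eval x ∂μ = 0) ∧
    ∃ T : Finset ℝ, ↑T ⊆ interior (convexHull ℝ (mSupport μ)) ∧
      n - (∑ j : Fin N, (d j + 1)) ≤ T.card ∧
      ∀ ξ ∈ T, Odd (S.rootMultiplicity ξ) := by
  classical
  obtain ⟨hmonic, hdeg, h0⟩ := hS
  set E := interior (convexHull ℝ (mSupport μ)) with hE
  set D := ∑ j : Fin N, (d j + 1) with hD
  have hside : ∀ f : Polynomial ℝ, f.natDegree ≤ n - D - 1 →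
      ∫ x, S.eval x * f.eval x * (rhoPoly E c d).eval x ∂μ = 0 :=
    fun f hf => part1 μ hmom E c d lam n S h0 hn f hf
  refine ⟨hside, ?_⟩
  set T := S.roots.toFinset.filter
    (fun ξ => ξ ∈ E ∧ Odd (Polynomial.rootMultiplicity ξ S)) with hT
  have hTsub : ↑T ⊆ E := by
    intro ξ hξ
    rw [Finset.mem_coe, hT, Finset.mem_filter] at hξ
    exact hξ.2.1
  have hTodd : ∀ ξ ∈ T, Odd (Polynomial.rootMultiplicity ξ S) := by
    intro ξ hξ
    rw [hT, Finset.mem_filter] at hξ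
    exact hξ.2.2
  refine ⟨T, hTsub, ?_, hTodd⟩
  by_contra hcard
  push_neg at hcard
  have hS0 : S ≠ 0 := hmonic.ne_zero
  set f := ∏ t ∈ T, (X - C t) with hf
  have hfmonic : f.Monic :=
    Polynomial.monic_prod_of_monic _ _ (fun t _ => Polynomial.monic_X_sub_C t)
  have hf0 : f ≠ 0 := hfmonic.ne_zero
  have hfdeg : f.natDegree = T.card := by
    rw [hf, Polynomial.natDegree_prod _ _ (fun t _ => Polynomial.X_sub_C_ne_zero t)]
    simp [Polynomial.natDegree_X_sub_C]
  have hint := hside f (by omega)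
  set ρ := rhoPoly E c d with hρ
  have hρ0 : ρ ≠ 0 := rhoPoly_ne_zero E c d
  set h := S * f * ρ with hh
  have hh0 : h ≠ 0 := mul_ne_zero (mul_ne_zero hS0 hf0) hρ0
  have hinth : ∫ x, h.eval x ∂μ = 0 := by
    rw [← hint]
    congr 1; funext x
    rw [hh]; simp
  have hTe : ∀ ξ ∈ E, (ξ ∈ T ↔ Odd (Polynomial.rootMultiplicity ξ S)) := by
    intro ξ hξ
    rw [hT, Finset.mem_filter, Multiset.mem_toFinset]
    constructor
    · rintro ⟨-, -, hodd⟩; exact hodd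
    · intro hodd
      refine ⟨?_, hξ, hodd⟩
      rw [Polynomial.mem_roots hS0]
      exact (Polynomial.rootMultiplicity_pos hS0).mp hodd.pos
  have hfm : ∀ ξ : ℝ, Polynomial.rootMultiplicity ξ f = if ξ ∈ T then 1 else 0 := by
    intro ξ
    by_cases hξT : ξ ∈ T
    · rw [if_pos hξT]
      have hsplit : f = (X - C ξ) * ∏ t ∈ T.erase ξ, (X - C t) :=
        (Finset.mul_prod_erase T _ hξT).symm
      have hrest0 : (∏ t ∈ T.erase ξ, ((X : Polynomial ℝ) - C t)).eval ξ ≠ 0 := by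
        rw [Polynomial.eval_prod]
        apply Finset.prod_ne_zero_iff.mpr
        intro t ht
        simp only [Polynomial.eval_sub, Polynomial.eval_X, Polynomial.eval_C]
        exact sub_ne_zero.mpr (fun hq => (Finset.mem_erase.mp ht).1 hq.symm)
      rw [hsplit, Polynomial.rootMultiplicity_mul
        (by rw [← hsplit]; exact hf0)]
      rw [Polynomial.rootMultiplicity_eq_zero hrest0, add_zero]
      have := Polynomial.rootMultiplicity_X_sub_C_pow ξ 1
      rwa [pow_one] at this
    · rw [if_neg hξT]
      apply Polynomial.rootMultiplicity_eq_zero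
      rw [hf]
      simp only [Polynomial.IsRoot, Polynomial.eval_prod, Polynomial.eval_sub,
        Polynomial.eval_X, Polynomial.eval_C]
      apply Finset.prod_ne_zero_iff.mpr
      intro t ht
      exact sub_ne_zero.mpr (fun hq => hξT (hq ▸ ht))
  have heven : ∀ ξ ∈ E, Even (Polynomial.rootMultiplicity ξ h) := by
    intro ξ hξ
    have hρm : Polynomial.rootMultiplicity ξ ρ = 0 := by
      apply Polynomial.rootMultiplicity_eq_zero
      exact rhoPoly_eval_ne E c d ξ (fun j hj => hcout j (hj ▸ hξ))
    rw [hh, Polynomial.rootMultiplicity_mul hh0, hρm, add_zero,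
      Polynomial.rootMultiplicity_mul (mul_ne_zero hS0 hf0), hfm ξ]
    by_cases hξT : ξ ∈ T
    · rw [if_pos hξT]
      exact (hTodd ξ hξT).add_one
    · rw [if_neg hξT, add_zero]
      rw [← Nat.not_odd_iff_even]
      intro hodd
      exact hξT ((hTe ξ hξ).mpr hodd)
  have hEconv : Convex ℝ E := (convex_convexHull ℝ (mSupport μ)).interior
  have hnsc : ∀ x ∈ E, ∀ y ∈ E, ¬(h.eval x < 0 ∧ 0 < h.eval y) := by
    rintro x hx y hy ⟨hxneg, hypos⟩
    obtain ⟨z, hzmem, hzodd⟩ := exists_odd_root h.natDegree h le_rfl x y hxneg hypos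
    have hzE : z ∈ E := by
      have hmin : min x y ∈ E := by
        rcases min_cases x y with ⟨he, _⟩ | ⟨he, _⟩ <;> rw [he] <;> assumption
      have hmax : max x y ∈ E := by
        rcases max_cases x y with ⟨he, _⟩ | ⟨he, _⟩ <;> rw [he] <;> assumption
      exact hEconv.ordConnected.out hmin hmax (Set.Ioo_subset_Icc_self hzmem)
    exact (Nat.not_odd_iff_even.mpr (heven z hzE)) hzodd
  have hmsub : mSupport μ ⊆ closure E := subset_closure_interior_hull hsupp
  by_cases hpos : ∀ x ∈ E, 0 ≤ h.eval x
  · have hclos : ∀ x ∈ mSupport μ, 0 ≤ h.eval x := by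
      intro x hx
      have : closure E ⊆ {x : ℝ | 0 ≤ h.eval x} :=
        closure_minimal hpos (isClosed_le continuous_const (Polynomial.continuous h))
      exact this (hmsub hx)
    exact integral_ne_zero_of_nonneg μ hmom hsupp h hh0 hclos hinth
  · push_neg at hpos
    obtain ⟨x0, hx0E, hx0neg⟩ := hpos
    have hneg : ∀ y ∈ E, h.eval y ≤ 0 := by
      intro y hy
      by_contra hc
      exact hnsc x0 hx0E y hy ⟨hx0neg, not_le.mp hc⟩
    have hclos : ∀ x ∈ mSupport μ, 0 ≤ (-h).eval x := by
      intro x hx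
      have : closure E ⊆ {x : ℝ | 0 ≤ (-h).eval x} := by
        refine closure_minimal ?_ (isClosed_le continuous_const (Polynomial.continuous (-h)))
        intro y hy
        simp only [Set.mem_setOf_eq, Polynomial.eval_neg]
        linarith [hneg y hy]
      exact this (hmsub hx)
    refine integral_ne_zero_of_nonneg μ hmom hsupp (-h) (neg_ne_zero.mpr hh0) hclos ?_
    simp only [Polynomial.eval_neg]
    rw [integral_neg, hinth, neg_zero]
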